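/- Let ψ_mGG(t) = η[ψ_mSt(β + ct; α, τ) − ψ_mSt(β; α, τ)] with 0 ≤ τ < α ≤ 1, β ≥ 0, c > 0, η > 0. Then ψ_mGG(t) ∼ η c^α ψ_mSt(t; α, τ) as t → ∞. -/

import Mathlib

open Real Filter

/-- Laplace exponent ψ_mSt(t; α, τ) of the mixed stable CRM. -/
noncomputable def psiMSt (α τ t : ℝ) : ℝ :=
  if t = 0 then 0 else if t = 1 then 1 else (t ^ α - t ^ τ) / ((α - τ) * Real.log t)

theorem stmt_8 (α τ β c η : ℝ) (h0 : 0 ≤ τ) (h1 : τ < α) (h2 : α ≤ 1)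
    (hβ : 0 ≤ β) (hc : 0 < c) (hη : 0 < η) :
    Filter.Tendsto
      (fun t : ℝ =>
        (η * (psiMSt α τ (β + c * t) - psiMSt α τ β)) / (η * c ^ α * psiMSt α τ t))
      Filter.atTop (nhds 1) := by
  set ψβ := psiMSt α τ β with hψβ
  have hα0 : 0 < α := lt_of_le_of_lt h0 h1
  have hατ : 0 < α - τ := by linarith
  -- the explicit comparison function
  set E : ℝ → ℝ := fun t =>
    (((β + c * t) / (c * t)) ^ α - ((β + c * t) / (c * t)) ^ τ * (c * t) ^ (τ - α)) /
        (1 - t ^ (τ - α)) * (Real.log t / Real.log (β + c * t)) -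
      ψβ * (α - τ) / c ^ α * (Real.log t / t ^ α / (1 - t ^ (τ - α))) with hE
  -- basic tendsto facts
  have hct : Tendsto (fun t : ℝ => c * t) atTop atTop :=
    Tendsto.const_mul_atTop hc tendsto_id
  have hratio : Tendsto (fun t : ℝ => (β + c * t) / (c * t)) atTop (nhds 1) := by
    have h0' : Tendsto (fun t : ℝ => β / (c * t) + 1) atTop (nhds (0 + 1)) :=
      (Tendsto.div_atTop tendsto_const_nhds hct).add tendsto_const_nhds
    rw [zero_add] at h0'
    refine h0'.congr' ?_
    filter_upwards [eventually_gt_atTop 0] with t ht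
    have : c * t ≠ 0 := (mul_pos hc ht).ne'
    field_simp
  have hA : Tendsto (fun t : ℝ => ((β + c * t) / (c * t)) ^ α) atTop (nhds 1) := by
    simpa using hratio.rpow_const (Or.inl one_ne_zero)
  have hAτ : Tendsto (fun t : ℝ => ((β + c * t) / (c * t)) ^ τ) atTop (nhds 1) := by
    simpa using hratio.rpow_const (Or.inl one_ne_zero)
  have hB : Tendsto (fun t : ℝ => (c * t) ^ (τ - α)) atTop (nhds 0) := by
    have := (tendsto_rpow_neg_atTop hατ).comp hct
    simpa [Function.comp_def, neg_sub] using this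
  have hBt : Tendsto (fun t : ℝ => t ^ (τ - α)) atTop (nhds 0) := by
    have := tendsto_rpow_neg_atTop hατ
    simpa [neg_sub] using this
  have hlog2 : Tendsto (fun t : ℝ => Real.log (β + c * t) / Real.log t) atTop (nhds 1) := by
    have hin : Tendsto (fun t : ℝ => (β + c * t) / t) atTop (nhds c) := by
      have h0' : Tendsto (fun t : ℝ => β / t + c) atTop (nhds (0 + c)) :=
        (Tendsto.div_atTop tendsto_const_nhds tendsto_id).add tendsto_const_nhds
      rw [zero_add] at h0'
      refine h0'.congr' ?_
      filter_upwards [eventually_gt_atTop 0] with t ht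
      field_simp
    have hlr : Tendsto (fun t : ℝ => Real.log ((β + c * t) / t) / Real.log t) atTop (nhds 0) :=
      Tendsto.div_atTop ((Real.continuousAt_log hc.ne').tendsto.comp hin) Real.tendsto_log_atTop
    have h0' : Tendsto (fun t : ℝ => Real.log ((β + c * t) / t) / Real.log t + 1) atTop
        (nhds (0 + 1)) := hlr.add tendsto_const_nhds
    rw [zero_add] at h0'
    refine h0'.congr' ?_
    filter_upwards [eventually_gt_atTop 1] with t ht
    have ht0 : (0 : ℝ) < t := by linarith
    have hbc : 0 < β + c * t := by nlinarith
    have hlt : Real.log t ≠ 0 := (Real.log_pos ht).ne'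
    rw [Real.log_div hbc.ne' ht0.ne']
    field_simp
    ring
  have hlog : Tendsto (fun t : ℝ => Real.log t / Real.log (β + c * t)) atTop (nhds 1) := by
    have := hlog2.inv₀ one_ne_zero
    simpa [inv_div] using this
  have hlogdiv : Tendsto (fun t : ℝ => Real.log t / t ^ α) atTop (nhds 0) :=
    (isLittleO_log_rpow_atTop hα0).tendsto_div_nhds_zero
  -- limit of E
  have hElim : Tendsto E atTop (nhds 1) := by
    have hT : Tendsto E atTop
        (nhds (((1 : ℝ) - 1 * 0) / (1 - 0) * 1 - ψβ * (α - τ) / c ^ α * (0 / (1 - 0)))) := by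
      exact (((hA.sub (hAτ.mul hB)).div (tendsto_const_nhds.sub hBt) (by norm_num)).mul
        hlog).sub (tendsto_const_nhds.mul (hlogdiv.div (tendsto_const_nhds.sub hBt)
          (by norm_num)))
    norm_num at hT
    exact hT
  -- eventual equality
  refine hElim.congr' ?_
  filter_upwards [eventually_ge_atTop (max 2 (2 / c))] with t ht
  have ht2 : (2 : ℝ) ≤ t := le_trans (le_max_left _ _) ht
  have htc2 : (2 : ℝ) ≤ c * t := by
    have : 2 / c ≤ t := le_trans (le_max_right _ _) ht
    calc (2 : ℝ) = c * (2 / c) := by field_simp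
    _ ≤ c * t := by nlinarith
  have ht1 : (1 : ℝ) < t := by linarith
  have ht0 : (0 : ℝ) < t := by linarith
  have hbc1 : (1 : ℝ) < β + c * t := by nlinarith
  have hbc0 : (0 : ℝ) < β + c * t := by linarith
  have hct0 : (0 : ℝ) < c * t := by linarith
  have hL1 : 0 < Real.log t := Real.log_pos ht1
  have hL2 : 0 < Real.log (β + c * t) := Real.log_pos hbc1
  have hden : t ^ τ < t ^ α := Real.rpow_lt_rpow_of_exponent_lt ht1 h1
  have hcα : (0 : ℝ) < c ^ α := Real.rpow_pos_of_pos hc α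
  have htα : (0 : ℝ) < t ^ α := Real.rpow_pos_of_pos ht0 α
  have hctα : (0 : ℝ) < (c * t) ^ α := Real.rpow_pos_of_pos hct0 α
  -- unfold psiMSt
  have e1 : psiMSt α τ (β + c * t) =
      ((β + c * t) ^ α - (β + c * t) ^ τ) / ((α - τ) * Real.log (β + c * t)) := by
    rw [psiMSt, if_neg hbc0.ne', if_neg hbc1.ne']
  have e2 : psiMSt α τ t = (t ^ α - t ^ τ) / ((α - τ) * Real.log t) := by
    rw [psiMSt, if_neg ht0.ne', if_neg ht1.ne']
  -- rpow identities
  have r1 : ((β + c * t) / (c * t)) ^ α = (β + c * t) ^ α / (c ^ α * t ^ α) := by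
    rw [Real.div_rpow hbc0.le hct0.le, Real.mul_rpow hc.le ht0.le]
  have r2 : ((β + c * t) / (c * t)) ^ τ = (β + c * t) ^ τ / (c ^ τ * t ^ τ) := by
    rw [Real.div_rpow hbc0.le hct0.le, Real.mul_rpow hc.le ht0.le]
  have r3 : (c * t) ^ (τ - α) = (c ^ τ * t ^ τ) / (c ^ α * t ^ α) := by
    rw [Real.rpow_sub hct0, Real.mul_rpow hc.le ht0.le, Real.mul_rpow hc.le ht0.le]
  have r4 : t ^ (τ - α) = t ^ τ / t ^ α := Real.rpow_sub ht0 τ α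
  have hcτ : (0 : ℝ) < c ^ τ := Real.rpow_pos_of_pos hc τ
  have hsub : t ^ α - t ^ τ ≠ 0 := by linarith
  rw [hE]
  simp only [e1, e2]
  rw [r1, r2, r3, r4]
  field_simp
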